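/- Let (Ω, 𝒜) be a measurable space and ν a finite signed measure on it with Jordan decomposition ν = ν⁺ − ν⁻. Then the infimum of the total variation ‖ν + μ‖ over all finite positive measures μ on (Ω, 𝒜) (i.e., the total-variation distance from ν to the set of finite nonpositive measures) equals ‖ν⁺‖, and it is attained at μ = ν⁻. -/

import Mathlib

open MeasureTheory Set
open scoped ENNReal

lemma toSignedMeasure_totalVariation {Ω : Type*} [MeasurableSpace Ω] (μ : Measure Ω)
    [IsFiniteMeasure μ] : μ.toSignedMeasure.totalVariation = μ := by
  have h : μ.toSignedMeasure.toJordanDecomposition =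
      ⟨μ, 0, Measure.MutuallySingular.zero_right⟩ := by
    apply SignedMeasure.toJordanDecomposition_eq
    simp [JordanDecomposition.toSignedMeasure, Measure.toSignedMeasure_zero]
  rw [SignedMeasure.totalVariation, h]
  simp

lemma le_totalVariation_add {Ω : Type*} [MeasurableSpace Ω] (ν : SignedMeasure Ω)
    (μ : Measure Ω) [IsFiniteMeasure μ] :
    ν.toJordanDecomposition.posPart Set.univ ≤
      (ν + μ.toSignedMeasure).totalVariation Set.univ := by
  obtain ⟨S, hS, hS₂, hS₃⟩ := ν.toJordanDecomposition.mutuallySingular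
  set σ := ν + μ.toSignedMeasure
  have hσtop : σ.totalVariation Set.univ ≠ ⊤ := by
    rw [SignedMeasure.totalVariation, Measure.add_apply]
    exact ENNReal.add_ne_top.2 ⟨measure_ne_top _ _, measure_ne_top _ _⟩
  have hptop : ν.toJordanDecomposition.posPart Set.univ ≠ ⊤ := measure_ne_top _ _
  rw [← ENNReal.toReal_le_toReal hptop hσtop]
  have hν : ν Sᶜ = (ν.toJordanDecomposition.posPart Set.univ).toReal := by
    conv_lhs => rw [← ν.toSignedMeasure_toJordanDecomposition]
    rw [JordanDecomposition.toSignedMeasure, VectorMeasure.sub_apply,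
      Measure.toSignedMeasure_apply_measurable hS.compl,
      Measure.toSignedMeasure_apply_measurable hS.compl, measureReal_def, measureReal_def, hS₃]
    have : ν.toJordanDecomposition.posPart Sᶜ = ν.toJordanDecomposition.posPart Set.univ := by
      refine measure_eq_measure_of_null_diff (Set.subset_univ _) ?_
      simpa using hS₂
    rw [this]
    simp
  have h1 : (ν.toJordanDecomposition.posPart Set.univ).toReal ≤ σ Sᶜ := by
    rw [← hν, VectorMeasure.add_apply, Measure.toSignedMeasure_apply_measurable hS.compl,
      measureReal_def]
    have : (0:ℝ) ≤ (μ Sᶜ).toReal := ENNReal.toReal_nonneg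
    linarith
  refine h1.trans ?_
  conv_lhs => rw [← σ.toSignedMeasure_toJordanDecomposition]
  rw [JordanDecomposition.toSignedMeasure, VectorMeasure.sub_apply,
    Measure.toSignedMeasure_apply_measurable hS.compl,
    Measure.toSignedMeasure_apply_measurable hS.compl,
    SignedMeasure.totalVariation, Measure.add_apply, measureReal_def, measureReal_def]
  have h2 : σ.toJordanDecomposition.posPart Sᶜ ≤ σ.toJordanDecomposition.posPart Set.univ :=
    measure_mono (Set.subset_univ _)
  have h3 : (σ.toJordanDecomposition.posPart Sᶜ).toReal ≤
      (σ.toJordanDecomposition.posPart Set.univ).toReal :=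
    ENNReal.toReal_le_toReal (measure_ne_top _ _) (measure_ne_top _ _) |>.2 h2
  have h4 : (0:ℝ) ≤ (σ.toJordanDecomposition.negPart Sᶜ).toReal := ENNReal.toReal_nonneg
  rw [ENNReal.toReal_add (measure_ne_top _ _) (measure_ne_top _ _)]
  have h5 : (0:ℝ) ≤ (σ.toJordanDecomposition.negPart Set.univ).toReal := ENNReal.toReal_nonneg
  linarith

/-- The index of lack of negativity of a finite signed measure `ν`: the infimum of the
total variation `‖ν + μ‖` over all finite positive measures `μ` (i.e. the distance from
`ν` to the set of finite nonpositive measures) equals `‖ν⁺‖`, and it is attained at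
`μ = ν⁻`. -/
theorem lon_eq_pos_part {Ω : Type*} [MeasurableSpace Ω] (ν : SignedMeasure Ω) :
    sInf {r : ℝ≥0∞ | ∃ (μ : Measure Ω) (_ : IsFiniteMeasure μ),
        r = (ν + μ.toSignedMeasure).totalVariation Set.univ} =
      ν.toJordanDecomposition.posPart Set.univ ∧
    (ν + ν.toJordanDecomposition.negPart.toSignedMeasure).totalVariation Set.univ =
      ν.toJordanDecomposition.posPart Set.univ := by
  have key : ν + ν.toJordanDecomposition.negPart.toSignedMeasure =
      ν.toJordanDecomposition.posPart.toSignedMeasure := by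
    nth_rewrite 1 [← ν.toSignedMeasure_toJordanDecomposition]
    rw [JordanDecomposition.toSignedMeasure]
    abel
  have attained : (ν + ν.toJordanDecomposition.negPart.toSignedMeasure).totalVariation
      Set.univ = ν.toJordanDecomposition.posPart Set.univ := by
    rw [key, toSignedMeasure_totalVariation]
  refine ⟨le_antisymm ?_ ?_, attained⟩
  · exact sInf_le ⟨ν.toJordanDecomposition.negPart, inferInstance, attained.symm⟩
  · refine le_sInf ?_
    rintro r ⟨μ, hμ, rfl⟩
    exact le_totalVariation_add ν μ
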